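/- (Four-parameter extension of Fu–Lascoux) For a positive integer n and parameters w, x, y, z, q with all denominators nonzero: (q;q)_n/(yz;q)_n · ∑_{i=1}^n [w^i y^{n-i} (x;q)_i (y;q)_i (z;q)_{n-i}] / [(wx;q)_i (q;q)_i (q;q)_{n-i}] = ∑_{i=1}^n [n choose i]_q (-1)^{i-1} q^{binom(i+1,2) - in} (1 - (w;q)_i/(wx;q)_i) · (y;q)_i/(yz;q)_i. -/

import Mathlib

noncomputable def qPoch (q a : ℝ) (n : ℕ) : ℝ := ∏ j ∈ Finset.range n, (1 - a * q ^ j)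

noncomputable def qBinom (q : ℝ) (n r : ℕ) : ℝ :=
  if r ≤ n then qPoch q q n / (qPoch q q r * qPoch q q (n - r)) else 0

open Finset

lemma qPoch_zero (q a : ℝ) : qPoch q a 0 = 1 := by simp [qPoch]

lemma qPoch_succ (q a : ℝ) (n : ℕ) : qPoch q a (n + 1) = qPoch q a n * (1 - a * q ^ n) :=
  Finset.prod_range_succ _ _

lemma qPoch_add (q a : ℝ) (s t : ℕ) :
    qPoch q a (s + t) = qPoch q a s * qPoch q (a * q ^ s) t := by
  unfold qPoch
  rw [Finset.prod_range_add]
  congr 1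
  refine Finset.prod_congr rfl fun j _ => ?_
  rw [pow_add]; ring

lemma qPoch_q_ne_zero {q : ℝ} (hq1 : ∀ j : ℕ, 1 ≤ j → 1 - q ^ j ≠ 0) (n : ℕ) :
    qPoch q q n ≠ 0 := by
  unfold qPoch
  rw [Finset.prod_ne_zero_iff]
  intro j _
  have := hq1 (j + 1) (by omega)
  rw [pow_succ] at this
  simpa [mul_comm] using this

lemma qPoch_ne_zero {q a : ℝ} (h : ∀ j : ℕ, 1 - a * q ^ j ≠ 0) (n : ℕ) :
    qPoch q a n ≠ 0 := by
  unfold qPoch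
  rw [Finset.prod_ne_zero_iff]
  exact fun j _ => h j

lemma qBinom_of_le (q : ℝ) {n r : ℕ} (h : r ≤ n) :
    qBinom q n r = qPoch q q n / (qPoch q q r * qPoch q q (n - r)) := if_pos h

lemma qBinom_of_gt (q : ℝ) {n r : ℕ} (h : n < r) : qBinom q n r = 0 := if_neg (by omega)

lemma qBinom_zero {q : ℝ} (hq1 : ∀ j : ℕ, 1 ≤ j → 1 - q ^ j ≠ 0) (n : ℕ) :
    qBinom q n 0 = 1 := by
  rw [qBinom_of_le q (Nat.zero_le n)]
  simp [qPoch_zero, div_self (qPoch_q_ne_zero hq1 n)]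

lemma qBinom_self {q : ℝ} (hq1 : ∀ j : ℕ, 1 ≤ j → 1 - q ^ j ≠ 0) (n : ℕ) :
    qBinom q n n = 1 := by
  rw [qBinom_of_le q le_rfl]
  simp [qPoch_zero, div_self (qPoch_q_ne_zero hq1 n)]

/-- q-Pascal, form A: `[m+1; r+1] = q^(r+1) [m; r+1] + [m; r]`. -/
lemma qPascalA {q : ℝ} (hq1 : ∀ j : ℕ, 1 ≤ j → 1 - q ^ j ≠ 0) (m r : ℕ) :
    qBinom q (m + 1) (r + 1) = q ^ (r + 1) * qBinom q m (r + 1) + qBinom q m r := by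
  rcases lt_trichotomy m r with h | rfl | h
  · rw [qBinom_of_gt q (by omega), qBinom_of_gt q (by omega), qBinom_of_gt q h]
    ring
  · rw [qBinom_self hq1, qBinom_of_gt q (by omega), qBinom_self hq1]
    ring
  · -- r < m : main case
    obtain ⟨t, rfl⟩ : ∃ t, m = r + 1 + t := ⟨m - r - 1, by omega⟩
    rw [qBinom_of_le q (by omega), qBinom_of_le q (by omega), qBinom_of_le q (by omega)]
    have e1 : r + 1 + t + 1 - (r + 1) = t + 1 := by omega
    have e2 : r + 1 + t - (r + 1) = t := by omega
    have e3 : r + 1 + t - r = t + 1 := by omega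
    rw [e1, e2, e3]
    have hA := qPoch_q_ne_zero hq1 r
    have hB := qPoch_q_ne_zero hq1 t
    have hr1 : (1 : ℝ) - q ^ (r + 1) ≠ 0 := hq1 (r + 1) (by omega)
    have ht1 : (1 : ℝ) - q ^ (t + 1) ≠ 0 := hq1 (t + 1) (by omega)
    have hm1 : (1 : ℝ) - q ^ (r + 1 + t + 1) ≠ 0 := hq1 _ (by omega)
    rw [show r + 1 + t + 1 = (r + 1 + t) + 1 from rfl, qPoch_succ q q (r + 1 + t),
      qPoch_succ q q r, qPoch_succ q q t]
    have hP := qPoch_q_ne_zero hq1 (r + 1 + t)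
    rw [show q * q ^ r = q ^ (r + 1) by rw [pow_succ]; ring,
      show q * q ^ t = q ^ (t + 1) by rw [pow_succ]; ring,
      show q * q ^ (r + 1 + t) = q ^ (r + 1 + t + 1) by rw [pow_succ]; ring]
    field_simp
    ring_nf

/-- q-Pascal, form B: `[a+b+1; a+1] = q^b [a+b; a] + [a+b; a+1]`. -/
lemma qPascalB {q : ℝ} (hq1 : ∀ j : ℕ, 1 ≤ j → 1 - q ^ j ≠ 0) (a b : ℕ) :
    qBinom q (a + b + 1) (a + 1) = q ^ b * qBinom q (a + b) a + qBinom q (a + b) (a + 1) := by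
  rcases Nat.eq_zero_or_pos b with rfl | hb
  · simp only [Nat.add_zero, pow_zero]
    rw [qBinom_self hq1, qBinom_self hq1, qBinom_of_gt q (by omega)]
    ring
  · obtain ⟨t, rfl⟩ : ∃ t, b = t + 1 := ⟨b - 1, by omega⟩
    rw [qBinom_of_le q (by omega), qBinom_of_le q (by omega), qBinom_of_le q (by omega)]
    have e1 : a + (t + 1) + 1 - (a + 1) = t + 1 := by omega
    have e2 : a + (t + 1) - a = t + 1 := by omega
    have e3 : a + (t + 1) - (a + 1) = t := by omega
    rw [e1, e2, e3]
    have hA := qPoch_q_ne_zero hq1 a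
    have hB := qPoch_q_ne_zero hq1 t
    have ha1 : (1 : ℝ) - q ^ (a + 1) ≠ 0 := hq1 (a + 1) (by omega)
    have ht1 : (1 : ℝ) - q ^ (t + 1) ≠ 0 := hq1 (t + 1) (by omega)
    have hm1 : (1 : ℝ) - q ^ (a + (t + 1) + 1) ≠ 0 := hq1 _ (by omega)
    have hP := qPoch_q_ne_zero hq1 (a + (t + 1))
    rw [show a + (t + 1) + 1 = (a + (t + 1)) + 1 from rfl, qPoch_succ q q (a + (t + 1)),
      qPoch_succ q q a, qPoch_succ q q t]
    rw [show q * q ^ a = q ^ (a + 1) by rw [pow_succ]; ring,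
      show q * q ^ t = q ^ (t + 1) by rw [pow_succ]; ring,
      show q * q ^ (a + (t + 1)) = q ^ (a + (t + 1) + 1) by rw [pow_succ]; ring]
    field_simp
    ring_nf

/-- q-Chu–Vandermonde convolution:
`∑_{r=0}^m [m;r] Y^(m-r) (Y;q)_r (z;q)_(m-r) = (Yz;q)_m`. -/
lemma lemC {q : ℝ} (hq1 : ∀ j : ℕ, 1 ≤ j → 1 - q ^ j ≠ 0) (Y z : ℝ) :
    ∀ m : ℕ, ∑ r ∈ range (m + 1),
        qBinom q m r * Y ^ (m - r) * qPoch q Y r * qPoch q z (m - r) = qPoch q (Y * z) m := by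
  intro m
  induction m with
  | zero => simp [qBinom_self hq1, qPoch_zero]
  | succ m ih =>
    have key : ∑ r ∈ range (m + 1 + 1),
        qBinom q (m + 1) r * Y ^ (m + 1 - r) * qPoch q Y r * qPoch q z (m + 1 - r)
        = (1 - Y * z * q ^ m) * ∑ r ∈ range (m + 1),
            qBinom q m r * Y ^ (m - r) * qPoch q Y r * qPoch q z (m - r) := by
      rw [Finset.sum_range_succ']
      have hsplit : ∀ r ∈ range (m + 1),
          qBinom q (m + 1) (r + 1) * Y ^ (m + 1 - (r + 1)) * qPoch q Y (r + 1)
            * qPoch q z (m + 1 - (r + 1))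
          = (q ^ (r + 1) * qBinom q m (r + 1) * Y ^ (m + 1 - (r + 1)) * qPoch q Y (r + 1)
              * qPoch q z (m + 1 - (r + 1)))
            + qBinom q m r * Y ^ (m - r) * qPoch q Y (r + 1) * qPoch q z (m - r) := by
        intro r _
        have e : m + 1 - (r + 1) = m - r := by omega
        rw [e, qPascalA hq1 m r]; ring
      rw [Finset.sum_congr rfl hsplit, Finset.sum_add_distrib]
      have h0 : qBinom q (m + 1) 0 * Y ^ (m + 1 - 0) * qPoch q Y 0 * qPoch q z (m + 1 - 0)
          = q ^ 0 * qBinom q m 0 * Y ^ (m + 1 - 0) * qPoch q Y 0 * qPoch q z (m + 1 - 0) := by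
        rw [qBinom_zero hq1, qBinom_zero hq1]; ring
      rw [add_right_comm, h0,
        show (∑ x ∈ range (m + 1), q ^ (x + 1) * qBinom q m (x + 1) * Y ^ (m + 1 - (x + 1))
              * qPoch q Y (x + 1) * qPoch q z (m + 1 - (x + 1)))
            + q ^ 0 * qBinom q m 0 * Y ^ (m + 1 - 0) * qPoch q Y 0 * qPoch q z (m + 1 - 0)
          = ∑ s ∈ range (m + 1 + 1), q ^ s * qBinom q m s * Y ^ (m + 1 - s) * qPoch q Y s
              * qPoch q z (m + 1 - s)
          from (Finset.sum_range_succ' (fun s => q ^ s * qBinom q m s * Y ^ (m + 1 - s)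
              * qPoch q Y s * qPoch q z (m + 1 - s)) (m + 1)).symm]
      -- drop the top term of the g-sum
      rw [Finset.sum_range_succ, qBinom_of_gt q (by omega)]
      simp only [mul_zero, zero_mul, add_zero]
      -- combine termwise
      rw [← Finset.sum_add_distrib, Finset.mul_sum]
      refine Finset.sum_congr rfl fun r hr => ?_
      have hrm : r ≤ m := Nat.lt_succ_iff.mp (mem_range.mp hr)
      obtain ⟨u, rfl⟩ : ∃ u, m = r + u := ⟨m - r, by omega⟩
      have e1 : r + u + 1 - r = u + 1 := by omega
      have e2 : r + u - r = u := by omega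
      rw [e1, e2, qPoch_succ q z u, qPoch_succ q Y r]
      rw [show (q:ℝ) ^ (r + u) = q ^ r * q ^ u from pow_add q r u]
      ring
    rw [key, ih, qPoch_succ q (Y*z) m]
    ring

/-- Divided form of the convolution. -/
lemma lemCdiv {q : ℝ} (hq1 : ∀ j : ℕ, 1 ≤ j → 1 - q ^ j ≠ 0) (Y z : ℝ) (m : ℕ) :
    ∑ r ∈ range (m + 1),
        Y ^ (m - r) * qPoch q Y r * qPoch q z (m - r) / (qPoch q q r * qPoch q q (m - r))
      = qPoch q (Y * z) m / qPoch q q m := by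
  rw [← lemC hq1 Y z m, Finset.sum_div]
  refine Finset.sum_congr rfl fun r hr => ?_
  have hrm : r ≤ m := Nat.lt_succ_iff.mp (mem_range.mp hr)
  rw [qBinom_of_le q hrm]
  have h1 := qPoch_q_ne_zero hq1 r
  have h2 := qPoch_q_ne_zero hq1 (m - r)
  have h3 := qPoch_q_ne_zero hq1 m
  field_simp

/-- Partial sums of signed, weighted q-binomials. -/
lemma lemP {q : ℝ} (hq : q ≠ 0) (hq1 : ∀ j : ℕ, 1 ≤ j → 1 - q ^ j ≠ 0)
    (i : ℕ) (hi : 1 ≤ i) :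
    ∀ d m, m + d = i + 1 → 1 ≤ m →
      ∑ j ∈ Icc m i, (qBinom q i j * (-1 : ℝ) ^ (j - 1)
          * q ^ (((j * (j + 1) / 2 : ℕ) : ℤ) - (j : ℤ) * i))
        = (-1 : ℝ) ^ (m - 1)
            * q ^ (-(((m - 1) * m / 2 : ℕ) : ℤ) - ((m : ℤ) - 1) * ((i : ℤ) - m))
            * qBinom q (i - 1) (m - 1) := by
  intro d
  induction d with
  | zero =>
    intro m hm h1
    have : m = i + 1 := by omega
    subst this
    rw [Finset.Icc_eq_empty (by omega), Finset.sum_empty,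
      show i + 1 - 1 = i from rfl, qBinom_of_gt q (by omega)]
    ring
  | succ d ih =>
    intro m hm h1
    have hmi : m ≤ i := by omega
    rw [Finset.Icc_eq_cons_Ioc hmi, Finset.sum_cons, ← Finset.Icc_add_one_left_eq_Ioc,
      ih (m + 1) (by omega) (by omega)]
    -- now pure algebra
    have key2 : (2:ℤ) * ((m*(m+1)/2 : ℕ) : ℤ) = (m:ℤ)*((m:ℤ)+1) := by
      obtain ⟨c, hc⟩ := Nat.even_mul_succ_self m
      have h2 : m*(m+1)/2 = c := by omega
      rw [h2]
      have h3 : (m*(m+1) : ℕ) = 2*c := by omega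
      have h4 := congrArg (Nat.cast : ℕ → ℤ) h3
      push_cast at h4
      linarith
    have key3 : (2:ℤ) * (((m-1)*m/2 : ℕ) : ℤ) = ((m:ℤ)-1)*(m:ℤ) := by
      obtain ⟨c, hc⟩ := Nat.even_mul_succ_self (m-1)
      rw [show m - 1 + 1 = m by omega] at hc
      have h2 : (m-1)*m/2 = c := by omega
      rw [h2]
      have h3 : ((m-1)*m : ℕ) = 2*c := by omega
      have h4 := congrArg (Nat.cast : ℕ → ℤ) h3
      push_cast [Nat.cast_sub h1] at h4
      linarith
    have hiB : qBinom q i m = q ^ (i - m) * qBinom q (i-1) (m-1) + qBinom q (i-1) m := by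
      have h := qPascalB hq1 (m - 1) (i - m)
      rw [show m - 1 + (i - m) + 1 = i by omega, show m - 1 + 1 = m by omega,
        show m - 1 + (i - m) = i - 1 by omega] at h
      exact h
    rw [hiB]
    simp only [Nat.add_sub_cancel]
    have he3 : (-((m * (m + 1) / 2 : ℕ):ℤ) - (((m + 1 : ℕ):ℤ) - 1) * ((i:ℤ) - ((m + 1 : ℕ):ℤ)))
        = (((m * (m + 1) / 2 : ℕ):ℤ) - (m:ℤ) * (i:ℤ)) := by
      rw [show ((m + 1 : ℕ):ℤ) = (m:ℤ)+1 by push_cast; ring]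
      linarith [key2]
    rw [he3]
    have he1 : (-(((m - 1) * m / 2 : ℕ):ℤ) - ((m:ℤ) - 1) * ((i:ℤ) - (m:ℤ)))
        = (((m * (m + 1) / 2 : ℕ):ℤ) - (m:ℤ) * (i:ℤ)) + ((i:ℤ) - (m:ℤ)) := by
      linarith [key2, key3]
    rw [he1, zpow_add₀ hq]
    have hzb : (q:ℝ) ^ (i - m) = q ^ ((i:ℤ) - (m:ℤ)) := by
      rw [← zpow_natCast, Nat.cast_sub hmi]
    rw [hzb]
    have hsgn : (-1:ℝ) ^ m = -(-1:ℝ) ^ (m - 1) := by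
      have h := pow_succ (-1:ℝ) (m-1)
      rw [show m - 1 + 1 = m by omega] at h
      rw [h]; ring
    rw [hsgn]
    ring

lemma lemP1 {q : ℝ} (hq : q ≠ 0) (hq1 : ∀ j : ℕ, 1 ≤ j → 1 - q ^ j ≠ 0)
    (i : ℕ) (hi : 1 ≤ i) :
    ∑ j ∈ Icc 1 i, (qBinom q i j * (-1 : ℝ) ^ (j - 1)
        * q ^ (((j * (j + 1) / 2 : ℕ) : ℤ) - (j : ℤ) * i)) = 1 := by
  rw [lemP hq hq1 i hi i 1 (by omega) (by omega)]
  norm_num [qBinom_zero hq1]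

lemma lemE {q : ℝ} (hq : q ≠ 0) (hq1 : ∀ j : ℕ, 1 ≤ j → 1 - q ^ j ≠ 0)
    (y z : ℝ) (j n : ℕ) (hjn : j ≤ n) :
    ∑ i ∈ Icc j n, qBinom q i j * q ^ (-((j : ℤ) * i)) *
        (y ^ (n - i) * qPoch q y i * qPoch q z (n - i) / (qPoch q q i * qPoch q q (n - i)))
      = (qPoch q y j / qPoch q q j * q ^ (-((j : ℤ) * n))) *
          (qPoch q (y * q ^ j * z) (n - j) / qPoch q q (n - j)) := by
  rw [← Finset.Ico_add_one_right_eq_Icc, Finset.sum_Ico_eq_sum_range,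
    show n + 1 - j = (n - j) + 1 by omega]
  set m := n - j with hm
  have hnm : n = j + m := by omega
  have claim : ∀ k ∈ range (m + 1),
      qBinom q (j + k) j * q ^ (-((j : ℤ) * ((j + k : ℕ) : ℤ))) *
        (y ^ (n - (j + k)) * qPoch q y (j + k) * qPoch q z (n - (j + k))
          / (qPoch q q (j + k) * qPoch q q (n - (j + k))))
      = (qPoch q y j / qPoch q q j * q ^ (-((j : ℤ) * n))) *
          ((y * q ^ j) ^ (m - k) * qPoch q (y * q ^ j) k * qPoch q z (m - k)
            / (qPoch q q k * qPoch q q (m - k))) := by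
    intro k hk
    have hkm : k ≤ m := Nat.lt_succ_iff.mp (mem_range.mp hk)
    rw [qBinom_of_le q (by omega : j ≤ j + k), show j + k - j = k by omega,
      show n - (j + k) = m - k by omega, qPoch_add q y j k]
    have hpow : q ^ (-((j : ℤ) * n)) * (y * q ^ j) ^ (m - k)
        = q ^ (-((j : ℤ) * ((j + k : ℕ) : ℤ))) * y ^ (m - k) := by
      rw [mul_pow, ← pow_mul, ← zpow_natCast q (j * (m - k)),
        mul_comm (y ^ (m - k)) _, ← mul_assoc, ← zpow_add₀ hq]
      congr 2
      have h1 : ((j * (m - k) : ℕ) : ℤ) = (j : ℤ) * ((m : ℤ) - k) := by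
        push_cast [Nat.cast_sub hkm]; ring
      have h2 : (n : ℤ) = (j : ℤ) + (m : ℤ) := by exact_mod_cast congrArg (Nat.cast (R := ℤ)) hnm
      rw [h1, h2]; push_cast; ring
    have step1 : (qPoch q y j / qPoch q q j * q ^ (-((j : ℤ) * n))) *
          ((y * q ^ j) ^ (m - k) * qPoch q (y * q ^ j) k * qPoch q z (m - k)
            / (qPoch q q k * qPoch q q (m - k)))
        = (qPoch q y j / qPoch q q j) * (q ^ (-((j : ℤ) * n)) * (y * q ^ j) ^ (m - k)) *
            (qPoch q (y * q ^ j) k * qPoch q z (m - k)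
              / (qPoch q q k * qPoch q q (m - k))) := by ring
    rw [step1, hpow]
    have hPj := qPoch_q_ne_zero hq1 j
    have hPk := qPoch_q_ne_zero hq1 k
    have hPjk := qPoch_q_ne_zero hq1 (j + k)
    have hPmk := qPoch_q_ne_zero hq1 (m - k)
    rw [qPoch_add q q j k]
    have hYk : qPoch q (q * q ^ j) k ≠ 0 := by
      have := qPoch_add q q j k
      intro h0
      rw [h0, mul_zero] at this
      exact hPjk this
    field_simp
  rw [Finset.sum_congr rfl claim, ← Finset.mul_sum, lemCdiv hq1 (y * q ^ j) z m]

lemma qPoch_shift_ne_zero {q c : ℝ} (hc : ∀ j : ℕ, 1 - c * q ^ j ≠ 0) (j k : ℕ) :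
    qPoch q (c * q ^ j) k ≠ 0 := by
  refine qPoch_ne_zero (fun t => ?_) k
  rw [mul_assoc, ← pow_add]
  exact hc (j + t)

lemma lemFL {q : ℝ} (hq : q ≠ 0) (hq1 : ∀ j : ℕ, 1 ≤ j → 1 - q ^ j ≠ 0)
    (a b : ℝ) (hab : ∀ j : ℕ, 1 - a * b * q ^ j ≠ 0) (i : ℕ) (hi : 1 ≤ i) :
    ∑ j ∈ Icc 1 i, qBinom q i j * (-1 : ℝ) ^ (j - 1)
        * q ^ (((j * (j + 1) / 2 : ℕ) : ℤ) - (j : ℤ) * i) * (qPoch q a j / qPoch q (a * b) j)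
      = 1 - a ^ i * qPoch q b i / qPoch q (a * b) i := by
  have hPi := qPoch_q_ne_zero hq1 i
  have habi := qPoch_ne_zero hab i
  -- step 1 : termwise rewriting via lemE
  have step1 : ∀ j ∈ Icc 1 i,
      qBinom q i j * (-1 : ℝ) ^ (j - 1)
          * q ^ (((j * (j + 1) / 2 : ℕ) : ℤ) - (j : ℤ) * i) * (qPoch q a j / qPoch q (a * b) j)
        = ∑ r ∈ Icc j i, ((-1 : ℝ) ^ (j - 1) * q ^ (((j * (j + 1) / 2 : ℕ) : ℤ))
            * (qPoch q q i / qPoch q (a * b) i))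
            * (qBinom q r j * q ^ (-((j : ℤ) * r)) *
              (a ^ (i - r) * qPoch q a r * qPoch q b (i - r)
                / (qPoch q q r * qPoch q q (i - r)))) := by
    intro j hj
    obtain ⟨hj1, hji⟩ := mem_Icc.mp hj
    rw [← Finset.mul_sum, lemE hq hq1 a b j i hji]
    have hsplit : (q : ℝ) ^ (((j * (j + 1) / 2 : ℕ) : ℤ) - (j : ℤ) * i)
        = q ^ (((j * (j + 1) / 2 : ℕ) : ℤ)) * q ^ (-((j : ℤ) * i)) := by
      rw [sub_eq_add_neg, zpow_add₀ hq]
    rw [hsplit]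
    have hpoch : qPoch q (a * b) i = qPoch q (a * b) j * qPoch q (a * q ^ j * b) (i - j) := by
      have h := qPoch_add q (a * b) j (i - j)
      rw [show j + (i - j) = i by omega] at h
      rw [h, show a * b * q ^ j = a * q ^ j * b by ring]
    have h1 : qPoch q (a * b) j ≠ 0 := qPoch_ne_zero hab j
    have h2 : qPoch q (a * q ^ j * b) (i - j) ≠ 0 := by
      rw [show a * q ^ j * b = a * b * q ^ j by ring]
      exact qPoch_shift_ne_zero hab j (i - j)
    have h3 := qPoch_q_ne_zero hq1 j
    have h4 := qPoch_q_ne_zero hq1 (i - j)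
    rw [qBinom_of_le q hji, hpoch]
    field_simp
    rw [mul_div_cancel_right₀ _ (qPoch_shift_ne_zero hab j (i - j))]
  rw [Finset.sum_congr rfl step1]
  -- step 2 : swap the double sum
  have hswap : ∑ j ∈ Icc 1 i, ∑ r ∈ Icc j i, ((-1 : ℝ) ^ (j - 1)
          * q ^ (((j * (j + 1) / 2 : ℕ) : ℤ)) * (qPoch q q i / qPoch q (a * b) i))
          * (qBinom q r j * q ^ (-((j : ℤ) * r)) *
            (a ^ (i - r) * qPoch q a r * qPoch q b (i - r)
              / (qPoch q q r * qPoch q q (i - r))))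
      = ∑ r ∈ Icc 1 i, ∑ j ∈ Icc 1 r, ((-1 : ℝ) ^ (j - 1)
          * q ^ (((j * (j + 1) / 2 : ℕ) : ℤ)) * (qPoch q q i / qPoch q (a * b) i))
          * (qBinom q r j * q ^ (-((j : ℤ) * r)) *
            (a ^ (i - r) * qPoch q a r * qPoch q b (i - r)
              / (qPoch q q r * qPoch q q (i - r)))) := by
    simp only [← Finset.Ico_add_one_right_eq_Icc]
    exact Finset.sum_Ico_Ico_comm 1 (i + 1) _
  rw [hswap]
  -- step 3 : inner sums via lemP1
  have step3 : ∀ r ∈ Icc 1 i, ∑ j ∈ Icc 1 r, ((-1 : ℝ) ^ (j - 1)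
          * q ^ (((j * (j + 1) / 2 : ℕ) : ℤ)) * (qPoch q q i / qPoch q (a * b) i))
          * (qBinom q r j * q ^ (-((j : ℤ) * r)) *
            (a ^ (i - r) * qPoch q a r * qPoch q b (i - r)
              / (qPoch q q r * qPoch q q (i - r))))
      = (qPoch q q i / qPoch q (a * b) i) *
          (a ^ (i - r) * qPoch q a r * qPoch q b (i - r)
            / (qPoch q q r * qPoch q q (i - r))) := by
    intro r hr
    obtain ⟨hr1, hri⟩ := mem_Icc.mp hr
    have : ∀ j ∈ Icc 1 r, ((-1 : ℝ) ^ (j - 1)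
          * q ^ (((j * (j + 1) / 2 : ℕ) : ℤ)) * (qPoch q q i / qPoch q (a * b) i))
          * (qBinom q r j * q ^ (-((j : ℤ) * r)) *
            (a ^ (i - r) * qPoch q a r * qPoch q b (i - r)
              / (qPoch q q r * qPoch q q (i - r))))
        = ((qPoch q q i / qPoch q (a * b) i) *
            (a ^ (i - r) * qPoch q a r * qPoch q b (i - r)
              / (qPoch q q r * qPoch q q (i - r)))) *
          (qBinom q r j * (-1 : ℝ) ^ (j - 1)
            * q ^ (((j * (j + 1) / 2 : ℕ) : ℤ) - (j : ℤ) * r)) := by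
      intro j hj
      rw [show (q : ℝ) ^ (((j * (j + 1) / 2 : ℕ) : ℤ) - (j : ℤ) * r)
          = q ^ (((j * (j + 1) / 2 : ℕ) : ℤ)) * q ^ (-((j : ℤ) * r)) by
        rw [sub_eq_add_neg, zpow_add₀ hq]]
      ring
    rw [Finset.sum_congr rfl this, ← Finset.mul_sum, lemP1 hq hq1 r hr1, mul_one]
  rw [Finset.sum_congr rfl step3, ← Finset.mul_sum]
  -- step 4 : evaluate via lemCdiv
  have hfull : ∑ r ∈ range (i + 1),
      a ^ (i - r) * qPoch q a r * qPoch q b (i - r) / (qPoch q q r * qPoch q q (i - r))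
      = qPoch q (a * b) i / qPoch q q i := lemCdiv hq1 a b i
  have hdecomp : ∑ r ∈ range (i + 1),
      a ^ (i - r) * qPoch q a r * qPoch q b (i - r) / (qPoch q q r * qPoch q q (i - r))
      = a ^ i * qPoch q b i / qPoch q q i
        + ∑ r ∈ Icc 1 i,
            a ^ (i - r) * qPoch q a r * qPoch q b (i - r) / (qPoch q q r * qPoch q q (i - r)) := by
    rw [Finset.sum_range_succ']
    simp only [← Finset.Ico_add_one_right_eq_Icc, Finset.sum_Ico_eq_sum_range]
    rw [add_comm]
    congr 1
    · simp [qPoch_zero]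
    · refine Finset.sum_congr (by rw [show i + 1 - 1 = i from rfl]) fun k _ => ?_
      rw [add_comm 1 k]
  have hIcc : ∑ r ∈ Icc 1 i,
      a ^ (i - r) * qPoch q a r * qPoch q b (i - r) / (qPoch q q r * qPoch q q (i - r))
      = qPoch q (a * b) i / qPoch q q i - a ^ i * qPoch q b i / qPoch q q i := by
    rw [hdecomp] at hfull; linarith
  rw [hIcc]
  field_simp

lemma lemF {q : ℝ} (hq : q ≠ 0) (hq1 : ∀ j : ℕ, 1 ≤ j → 1 - q ^ j ≠ 0)
    (w x : ℝ) (hwx : ∀ j : ℕ, 1 - w * x * q ^ j ≠ 0) (i : ℕ) (hi : 1 ≤ i) :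
    ∑ j ∈ Icc 1 i, qBinom q i j * (-1 : ℝ) ^ (j - 1)
        * q ^ (((j * (j + 1) / 2 : ℕ) : ℤ) - (j : ℤ) * i)
        * (1 - qPoch q w j / qPoch q (w * x) j)
      = w ^ i * qPoch q x i / qPoch q (w * x) i := by
  have h1 := lemP1 hq hq1 i hi
  have h2 := lemFL hq hq1 w x hwx i hi
  have hsplit : ∑ j ∈ Icc 1 i, qBinom q i j * (-1 : ℝ) ^ (j - 1)
        * q ^ (((j * (j + 1) / 2 : ℕ) : ℤ) - (j : ℤ) * i)
        * (1 - qPoch q w j / qPoch q (w * x) j)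
      = ∑ j ∈ Icc 1 i, (qBinom q i j * (-1 : ℝ) ^ (j - 1)
          * q ^ (((j * (j + 1) / 2 : ℕ) : ℤ) - (j : ℤ) * i)
        - qBinom q i j * (-1 : ℝ) ^ (j - 1)
          * q ^ (((j * (j + 1) / 2 : ℕ) : ℤ) - (j : ℤ) * i)
          * (qPoch q w j / qPoch q (w * x) j)) :=
    Finset.sum_congr rfl fun j _ => by ring
  rw [hsplit, Finset.sum_sub_distrib, h1, h2]
  ring

/-- Proposition 3.3: a four-parameter extension of the Fu–Lascoux identity. -/
theorem prop33 (q w x y z : ℝ) (n : ℕ) (hn : 0 < n) (hq : q ≠ 0)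
    (hden1 : ∀ j : ℕ, 1 ≤ j → 1 - q ^ j ≠ 0)
    (hden2 : ∀ j : ℕ, 0 ≤ j → 1 - w * x * q ^ j ≠ 0)
    (hden3 : ∀ j : ℕ, 0 ≤ j → 1 - y * z * q ^ j ≠ 0) :
    qPoch q q n / qPoch q (y * z) n *
        ∑ i ∈ Finset.Icc 1 n,
          w ^ i * y ^ (n - i) * qPoch q x i * qPoch q y i * qPoch q z (n - i) /
            (qPoch q (w * x) i * qPoch q q i * qPoch q q (n - i)) =
      ∑ i ∈ Finset.Icc 1 n,
        qBinom q n i * (-1) ^ (i - 1) * q ^ (((i * (i + 1) / 2 : ℕ) : ℤ) - (i : ℤ) * n) *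
          (1 - qPoch q w i / qPoch q (w * x) i) * (qPoch q y i / qPoch q (y * z) i) := by
  have hq1 := hden1
  have hwx : ∀ j : ℕ, 1 - w * x * q ^ j ≠ 0 := fun j => hden2 j (Nat.zero_le j)
  have hyz : ∀ j : ℕ, 1 - y * z * q ^ j ≠ 0 := fun j => hden3 j (Nat.zero_le j)
  rw [Finset.mul_sum]
  have step1 : ∀ i ∈ Icc 1 n,
      qPoch q q n / qPoch q (y * z) n *
        (w ^ i * y ^ (n - i) * qPoch q x i * qPoch q y i * qPoch q z (n - i) /
          (qPoch q (w * x) i * qPoch q q i * qPoch q q (n - i)))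
      = ∑ j ∈ Icc 1 i,
          (qBinom q i j * (-1 : ℝ) ^ (j - 1)
              * q ^ (((j * (j + 1) / 2 : ℕ) : ℤ) - (j : ℤ) * i)
              * (1 - qPoch q w j / qPoch q (w * x) j))
            * (qPoch q q n / qPoch q (y * z) n *
                (y ^ (n - i) * qPoch q y i * qPoch q z (n - i)
                  / (qPoch q q i * qPoch q q (n - i)))) := by
    intro i hi'
    obtain ⟨h1i, hin⟩ := mem_Icc.mp hi'
    rw [← Finset.sum_mul, lemF hq hq1 w x hwx i h1i]
    have hwxi := qPoch_ne_zero hwx i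
    have hPi := qPoch_q_ne_zero hq1 i
    have hPni := qPoch_q_ne_zero hq1 (n - i)
    have hyzn := qPoch_ne_zero hyz n
    field_simp
  rw [Finset.sum_congr rfl step1]
  -- swap the double sum
  have hswap : ∑ i ∈ Icc 1 n, ∑ j ∈ Icc 1 i,
      (qBinom q i j * (-1 : ℝ) ^ (j - 1)
          * q ^ (((j * (j + 1) / 2 : ℕ) : ℤ) - (j : ℤ) * i)
          * (1 - qPoch q w j / qPoch q (w * x) j))
        * (qPoch q q n / qPoch q (y * z) n *
            (y ^ (n - i) * qPoch q y i * qPoch q z (n - i)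
              / (qPoch q q i * qPoch q q (n - i))))
      = ∑ j ∈ Icc 1 n, ∑ i ∈ Icc j n,
      (qBinom q i j * (-1 : ℝ) ^ (j - 1)
          * q ^ (((j * (j + 1) / 2 : ℕ) : ℤ) - (j : ℤ) * i)
          * (1 - qPoch q w j / qPoch q (w * x) j))
        * (qPoch q q n / qPoch q (y * z) n *
            (y ^ (n - i) * qPoch q y i * qPoch q z (n - i)
              / (qPoch q q i * qPoch q q (n - i)))) := by
    simp only [← Finset.Ico_add_one_right_eq_Icc]
    exact (Finset.sum_Ico_Ico_comm 1 (n + 1) _).symm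
  rw [hswap]
  refine Finset.sum_congr rfl fun j hj => ?_
  obtain ⟨hj1, hjn⟩ := mem_Icc.mp hj
  have hterm : ∀ i ∈ Icc j n,
      (qBinom q i j * (-1 : ℝ) ^ (j - 1)
          * q ^ (((j * (j + 1) / 2 : ℕ) : ℤ) - (j : ℤ) * i)
          * (1 - qPoch q w j / qPoch q (w * x) j))
        * (qPoch q q n / qPoch q (y * z) n *
            (y ^ (n - i) * qPoch q y i * qPoch q z (n - i)
              / (qPoch q q i * qPoch q q (n - i))))
      = ((-1 : ℝ) ^ (j - 1) * q ^ (((j * (j + 1) / 2 : ℕ) : ℤ))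
          * (1 - qPoch q w j / qPoch q (w * x) j)
          * (qPoch q q n / qPoch q (y * z) n))
        * (qBinom q i j * q ^ (-((j : ℤ) * i)) *
            (y ^ (n - i) * qPoch q y i * qPoch q z (n - i)
              / (qPoch q q i * qPoch q q (n - i)))) := by
    intro i _
    rw [show (q : ℝ) ^ (((j * (j + 1) / 2 : ℕ) : ℤ) - (j : ℤ) * i)
        = q ^ (((j * (j + 1) / 2 : ℕ) : ℤ)) * q ^ (-((j : ℤ) * i)) by
      rw [sub_eq_add_neg, zpow_add₀ hq]]
    ring
  rw [Finset.sum_congr rfl hterm, ← Finset.mul_sum, lemE hq hq1 y z j n hjn]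
  -- final algebra
  have hpoch : qPoch q (y * z) n = qPoch q (y * z) j * qPoch q (y * q ^ j * z) (n - j) := by
    have h := qPoch_add q (y * z) j (n - j)
    rw [show j + (n - j) = n by omega] at h
    rw [h, show y * z * q ^ j = y * q ^ j * z by ring]
  have h1 : qPoch q (y * z) j ≠ 0 := qPoch_ne_zero hyz j
  have h2 : qPoch q (y * q ^ j * z) (n - j) ≠ 0 := by
    rw [show y * q ^ j * z = y * z * q ^ j by ring]
    exact qPoch_shift_ne_zero hyz j (n - j)
  have h3 := qPoch_q_ne_zero hq1 j
  have h4 := qPoch_q_ne_zero hq1 (n - j)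
  rw [qBinom_of_le q hjn, hpoch,
    show (q : ℝ) ^ (((j * (j + 1) / 2 : ℕ) : ℤ) - (j : ℤ) * n)
        = q ^ (((j * (j + 1) / 2 : ℕ) : ℤ)) * q ^ (-((j : ℤ) * n)) by
      rw [sub_eq_add_neg, zpow_add₀ hq]]
  field_simp
  have hX := qPoch_shift_ne_zero hyz j (n - j)
  field_simp
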